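/- If λ_max(β·A_C + (1−δ)·I_n) < 1, then the origin 0_n is a globally attracting fixed point of both mean-field dynamics: for every initial condition x^0 ∈ [0,1]^n, the iterates x^{t+1} = ψ(x^t) converge to 0_n as t → ∞, and likewise the iterates x^{t+1} = φ(x^t) converge to 0_n. -/

import Mathlib

set_option maxHeartbeats 1000000


open Finset Filter Topology Matrix
open Pointwise

noncomputable section

/-- Awareness information received by node `i`: a weighted combination of the fraction of
infected social-network neighbors and the global fraction of infected nodes. -/
def infoAwareness (n : ℕ) (GI : SimpleGraph (Fin n)) [DecidableRel GI.Adj]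
    (α : ℝ) (x : Fin n → ℝ) (i : Fin n) : ℝ :=
  (α / ((GI.neighborFinset i).card : ℝ)) * ∑ j ∈ GI.neighborFinset i, x j
    + ((1 - α) / (n : ℝ)) * ∑ j, x j

/-- Social distancing action of node `i`. -/
def distAction (n : ℕ) (GI : SimpleGraph (Fin n)) [DecidableRel GI.Adj]
    (α : ℝ) (x : Fin n → ℝ) (i : Fin n) : ℝ :=
  1 - infoAwareness n GI α x i

/-- Benchmark susceptible-to-infected probability `p01_i(x)`. -/
def p01Bench (n : ℕ) (GC : SimpleGraph (Fin n)) [DecidableRel GC.Adj]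
    (β : ℝ) (x : Fin n → ℝ) (i : Fin n) : ℝ :=
  1 - ∏ j ∈ GC.neighborFinset i, (1 - β * x j)

/-- Distancing susceptible-to-infected probability `p01d_i(x)`. -/
def p01Dist (n : ℕ) (GC GI : SimpleGraph (Fin n)) [DecidableRel GC.Adj] [DecidableRel GI.Adj]
    (α β : ℝ) (x : Fin n → ℝ) (i : Fin n) : ℝ :=
  1 - ∏ j ∈ GC.neighborFinset i, (1 - β * distAction n GI α x i * x j)

/-- Distancing mean-field map `φ`. -/
def phiMap (n : ℕ) (GC GI : SimpleGraph (Fin n)) [DecidableRel GC.Adj] [DecidableRel GI.Adj]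
    (α β δ : ℝ) (x : Fin n → ℝ) (i : Fin n) : ℝ :=
  (1 - δ) * x i + (1 - (1 - δ) * x i) * p01Dist n GC GI α β x i

/-- Benchmark mean-field map `ψ`. -/
def psiMap (n : ℕ) (GC : SimpleGraph (Fin n)) [DecidableRel GC.Adj]
    (β δ : ℝ) (x : Fin n → ℝ) (i : Fin n) : ℝ :=
  (1 - δ) * x i + (1 - (1 - δ) * x i) * p01Bench n GC β x i

end

section AuxLemmas


/-- Weierstrass product inequality. -/
lemma weier_prod {ι : Type*} (s : Finset ι) (a : ι → ℝ)
    (h0 : ∀ i ∈ s, 0 ≤ a i) (h1 : ∀ i ∈ s, a i ≤ 1) :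
    1 - ∑ i ∈ s, a i ≤ ∏ i ∈ s, (1 - a i) := by
  classical
  induction s using Finset.induction_on with
  | empty => simp
  | insert _ _ hx ih =>
    rename_i x t
    rw [Finset.sum_insert hx, Finset.prod_insert hx]
    have h0' : ∀ i ∈ t, 0 ≤ a i := fun i hi => h0 i (Finset.mem_insert_of_mem hi)
    have h1' : ∀ i ∈ t, a i ≤ 1 := fun i hi => h1 i (Finset.mem_insert_of_mem hi)
    have ih' := ih h0' h1'
    have hax0 := h0 x (Finset.mem_insert_self x t)
    have hax1 := h1 x (Finset.mem_insert_self x t)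
    have hsum : 0 ≤ ∑ i ∈ t, a i := Finset.sum_nonneg h0'
    nlinarith [mul_le_mul_of_nonneg_left ih' (by linarith : (0:ℝ) ≤ 1 - a x)]

lemma rayleigh_upper {n : ℕ} (M : Matrix (Fin n) (Fin n) ℝ) (hMs : Mᵀ = M)
    (lam : ℝ) (hlam : ∀ s ∈ spectrum ℝ M, s ≤ lam) (x : Fin n → ℝ) :
    x ⬝ᵥ (M *ᵥ x) ≤ lam * (x ⬝ᵥ x) := by
  have hPh : (lam • (1 : Matrix (Fin n) (Fin n) ℝ) - M).IsHermitian := by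
    rw [Matrix.IsHermitian, Matrix.conjTranspose_eq_transpose_of_trivial]
    rw [Matrix.transpose_sub, Matrix.transpose_smul, Matrix.transpose_one, hMs]
  have hP : (lam • (1 : Matrix (Fin n) (Fin n) ℝ) - M).PosSemidef := by
    refine hPh.posSemidef_iff_eigenvalues_nonneg.mpr fun i => ?_
    have hmem := hPh.eigenvalues_mem_spectrum_real i
    have hspec : spectrum ℝ (lam • (1 : Matrix (Fin n) (Fin n) ℝ) - M)
        = ({lam} : Set ℝ) - spectrum ℝ M := by
      conv_lhs => rw [show lam • (1 : Matrix (Fin n) (Fin n) ℝ)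
        = algebraMap ℝ (Matrix (Fin n) (Fin n) ℝ) lam from
          (Algebra.algebraMap_eq_smul_one lam).symm]
      exact (spectrum.singleton_sub_eq M lam).symm
    rw [hspec] at hmem
    obtain ⟨r, hr, s, hs, hrs⟩ := Set.mem_sub.mp hmem
    rw [Set.mem_singleton_iff] at hr
    subst hr
    have := hlam s hs
    rw [← hrs]
    exact sub_nonneg.mpr this
  have h := hP.dotProduct_mulVec_nonneg x
  rw [star_trivial] at h
  rw [Matrix.sub_mulVec, Matrix.smul_mulVec, Matrix.one_mulVec, dotProduct_sub,
    dotProduct_smul] at h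
  simp only [smul_eq_mul] at h
  linarith

lemma opnorm_sq_bound {n : ℕ} (M : Matrix (Fin n) (Fin n) ℝ) (hMs : Mᵀ = M) (lam : ℝ)
    (hup : ∀ x : Fin n → ℝ, x ⬝ᵥ (M *ᵥ x) ≤ lam * (x ⬝ᵥ x))
    (hlo : ∀ x : Fin n → ℝ, -(lam * (x ⬝ᵥ x)) ≤ x ⬝ᵥ (M *ᵥ x))
    (w : Fin n → ℝ) : (M *ᵥ w) ⬝ᵥ (M *ᵥ w) ≤ lam ^ 2 * (w ⬝ᵥ w) := by
  have hself : ∀ u : Fin n → ℝ, 0 ≤ u ⬝ᵥ u :=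
    fun u => Finset.sum_nonneg fun i _ => mul_self_nonneg _
  have hbil : ∀ u v : Fin n → ℝ,
      u ⬝ᵥ (M *ᵥ v) + v ⬝ᵥ (M *ᵥ u) ≤ lam * (u ⬝ᵥ u) + lam * (v ⬝ᵥ v) := by
    intro u v
    have h1 := hup (u + v)
    have h2 := hlo (u - v)
    have e1 : (u + v) ⬝ᵥ (M *ᵥ (u + v))
        = u ⬝ᵥ (M *ᵥ u) + u ⬝ᵥ (M *ᵥ v) + (v ⬝ᵥ (M *ᵥ u) + v ⬝ᵥ (M *ᵥ v)) := by
      simp only [Matrix.mulVec_add, dotProduct_add, add_dotProduct]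
      ring
    have e2 : (u - v) ⬝ᵥ (M *ᵥ (u - v))
        = u ⬝ᵥ (M *ᵥ u) - u ⬝ᵥ (M *ᵥ v) - (v ⬝ᵥ (M *ᵥ u) - v ⬝ᵥ (M *ᵥ v)) := by
      simp only [Matrix.mulVec_sub, dotProduct_sub, sub_dotProduct]
      ring
    have e3 : (u + v) ⬝ᵥ (u + v) = u ⬝ᵥ u + 2 * (u ⬝ᵥ v) + v ⬝ᵥ v := by
      simp only [dotProduct_add, add_dotProduct]
      rw [dotProduct_comm v u]; ring
    have e4 : (u - v) ⬝ᵥ (u - v) = u ⬝ᵥ u - 2 * (u ⬝ᵥ v) + v ⬝ᵥ v := by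
      simp only [dotProduct_sub, sub_dotProduct]
      rw [dotProduct_comm v u]; ring
    rw [e1, e3] at h1
    rw [e2, e4] at h2
    linarith
  have hsym : ∀ u v : Fin n → ℝ, u ⬝ᵥ (M *ᵥ v) = (M *ᵥ u) ⬝ᵥ v := by
    intro u v
    rw [Matrix.dotProduct_mulVec, ← Matrix.mulVec_transpose, hMs]
  set v := M *ᵥ w with hv
  set a := w ⬝ᵥ w with hadef
  set b := v ⬝ᵥ v with hbdef
  have ha : 0 ≤ a := hself w
  have hb : 0 ≤ b := hself v
  rcases eq_or_lt_of_le hb with hb0 | hbpos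
  · calc b = 0 := hb0.symm
      _ ≤ lam ^ 2 * a := by positivity
  have hapos : 0 < a := by
    rcases eq_or_lt_of_le ha with ha0 | h
    · exfalso
      have hw : w = 0 := dotProduct_self_eq_zero.mp ha0.symm
      have : b = 0 := by rw [hbdef, hv, hw, Matrix.mulVec_zero, zero_dotProduct]
      exact absurd this (ne_of_gt hbpos)
    · exact h
  -- key scaled inequality with t = √b/√a
  set sa := Real.sqrt a with hsa
  set sb := Real.sqrt b with hsb
  have hsapos : 0 < sa := Real.sqrt_pos.mpr hapos
  have hsbpos : 0 < sb := Real.sqrt_pos.mpr hbpos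
  have hsa2 : sa * sa = a := Real.mul_self_sqrt ha
  have hsb2 : sb * sb = b := Real.mul_self_sqrt hb
  set s := Real.sqrt (sb / sa) with hs
  have hspos : 0 < s := Real.sqrt_pos.mpr (by positivity)
  have hs2 : s * s = sb / sa := Real.mul_self_sqrt (by positivity)
  have hkey := hbil (s • w) (s⁻¹ • v)
  have l1 : (s • w) ⬝ᵥ (M *ᵥ (s⁻¹ • v)) = w ⬝ᵥ (M *ᵥ v) := by
    rw [Matrix.mulVec_smul, smul_dotProduct, dotProduct_smul, smul_eq_mul, smul_eq_mul,
      ← mul_assoc, mul_inv_cancel₀ (ne_of_gt hspos), one_mul]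
  have l2 : (s⁻¹ • v) ⬝ᵥ (M *ᵥ (s • w)) = v ⬝ᵥ (M *ᵥ w) := by
    rw [Matrix.mulVec_smul, smul_dotProduct, dotProduct_smul, smul_eq_mul, smul_eq_mul,
      ← mul_assoc, inv_mul_cancel₀ (ne_of_gt hspos), one_mul]
  have l3 : (s • w) ⬝ᵥ (s • w) = (s * s) * a := by
    rw [smul_dotProduct, dotProduct_smul, smul_eq_mul, smul_eq_mul, ← hadef]; ring
  have l4 : (s⁻¹ • v) ⬝ᵥ (s⁻¹ • v) = (s * s)⁻¹ * b := by
    rw [smul_dotProduct, dotProduct_smul, smul_eq_mul, smul_eq_mul, ← hbdef, mul_inv]; ring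
  have l5 : w ⬝ᵥ (M *ᵥ v) = b := by rw [hsym w v, ← hv, ← hbdef]
  have l6 : v ⬝ᵥ (M *ᵥ w) = b := by rw [← hv, ← hbdef]
  rw [l1, l2, l3, l4, l5, l6, hs2] at hkey
  -- hkey : b + b ≤ lam * (sb/sa * a) + lam * ((sb/sa)⁻¹ * b)
  have e5 : sb / sa * a = sb * sa := by
    field_simp
    nlinarith [hsa2]
  have e6 : (sb / sa)⁻¹ * b = sa * sb := by
    rw [inv_div]
    field_simp
    nlinarith [hsb2]
  rw [e5, e6] at hkey
  -- hkey : b + b ≤ lam * (sb * sa) + lam * (sa * sb), so b ≤ lam * sa * sb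
  have hble : sb * sb ≤ (lam * sa) * sb := by nlinarith
  have hsble : sb ≤ lam * sa := by
    by_contra hc
    push_neg at hc
    nlinarith
  have hlamnn : 0 ≤ lam := by
    by_contra hneg
    push_neg at hneg
    nlinarith
  calc b = sb * sb := hsb2.symm
    _ ≤ (lam * sa) * (lam * sa) := mul_le_mul hsble hsble (le_of_lt hsbpos) (by positivity)
    _ = lam ^ 2 * a := by rw [← hsa2]; ring

end AuxLemmas

open Filter Topology in
/-- if `λ_max(β·A_C + (1−δ)·I_n) < 1`, then the origin is a globally
attracting fixed point of both mean-field dynamics: from every initial condition in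
`[0,1]^n` the iterates of `ψ` converge to `0`, and likewise the iterates of `φ`. -/
theorem origin_globally_attracting_below_threshold
    (n : ℕ) (hn : 0 < n) (GC GI : SimpleGraph (Fin n)) [DecidableRel GC.Adj] [DecidableRel GI.Adj]
    (hGI : ∀ i, (GI.neighborFinset i).Nonempty)
    (α β δ : ℝ) (hα : α ∈ Set.Icc (0:ℝ) 1) (hβ : β ∈ Set.Ioo (0:ℝ) 1)
    (hδ : δ ∈ Set.Ioo (0:ℝ) 1) (lam : ℝ)
    (hlam : IsGreatest
      (spectrum ℝ (β • GC.adjMatrix ℝ + (1 - δ) • (1 : Matrix (Fin n) (Fin n) ℝ))) lam)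
    (hlam1 : lam < 1) :
    ∀ x0 : Fin n → ℝ, (∀ i, x0 i ∈ Set.Icc (0:ℝ) 1) →
      Tendsto (fun t => (fun x i => psiMap n GC β δ x i)^[t] x0) atTop
        (𝓝 (0 : Fin n → ℝ)) ∧
      Tendsto (fun t => (fun x i => phiMap n GC GI α β δ x i)^[t] x0) atTop
        (𝓝 (0 : Fin n → ℝ)) := by
  intro x0 hx0
  obtain ⟨hβ0, hβ1⟩ := hβ
  obtain ⟨hδ0, hδ1⟩ := hδ
  obtain ⟨hα0, hα1⟩ := hα
  set M : Matrix (Fin n) (Fin n) ℝ :=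
    β • GC.adjMatrix ℝ + (1 - δ) • (1 : Matrix (Fin n) (Fin n) ℝ) with hMdef
  -- basic matrix facts
  have hMs : Mᵀ = M := by
    rw [hMdef, Matrix.transpose_add, Matrix.transpose_smul, Matrix.transpose_smul,
      SimpleGraph.transpose_adjMatrix, Matrix.transpose_one]
  have hMnn : ∀ i j, 0 ≤ M i j := by
    intro i j
    rw [hMdef]
    simp only [Matrix.add_apply, Matrix.smul_apply, smul_eq_mul, SimpleGraph.adjMatrix_apply,
      Matrix.one_apply]
    have h1 : (0:ℝ) ≤ if GC.Adj i j then (1:ℝ) else 0 := by split_ifs <;> norm_num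
    have h2 : (0:ℝ) ≤ if i = j then (1:ℝ) else 0 := by split_ifs <;> norm_num
    have := mul_nonneg (le_of_lt hβ0) h1
    have := mul_nonneg (by linarith : (0:ℝ) ≤ 1 - δ) h2
    linarith
  have hray : ∀ x : Fin n → ℝ, x ⬝ᵥ (M *ᵥ x) ≤ lam * (x ⬝ᵥ x) :=
    rayleigh_upper M hMs lam (fun s hs => hlam.2 hs)
  -- lam is positive
  have hlampos : 0 < lam := by
    set e : Fin n → ℝ := fun j => if j = ⟨0, hn⟩ then (1:ℝ) else 0 with he
    have h2 : M *ᵥ e = fun i => M i ⟨0, hn⟩ := by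
      funext i
      simp [Matrix.mulVec, dotProduct, he, Finset.sum_ite_eq', mul_ite]
    have h3 : e ⬝ᵥ (M *ᵥ e) = M ⟨0, hn⟩ ⟨0, hn⟩ := by
      rw [h2]
      simp [dotProduct, he, Finset.sum_ite_eq', ite_mul]
    have h4 : e ⬝ᵥ e = 1 := by
      simp [dotProduct, he, Finset.sum_ite_eq', ite_mul]
    have h5 : M ⟨0, hn⟩ ⟨0, hn⟩ = 1 - δ := by
      rw [hMdef]
      simp [Matrix.add_apply, Matrix.smul_apply, Matrix.one_apply]
    have := hray e
    rw [h3, h4, h5, mul_one] at this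
    linarith
  have hlamnn : 0 ≤ lam := le_of_lt hlampos
  -- Rayleigh lower bound via nonnegativity of entries
  have hrayneg : ∀ x : Fin n → ℝ, -(lam * (x ⬝ᵥ x)) ≤ x ⬝ᵥ (M *ᵥ x) := by
    intro x
    set y : Fin n → ℝ := fun i => |x i| with hy
    have hexp : ∀ u : Fin n → ℝ, u ⬝ᵥ (M *ᵥ u) = ∑ i, ∑ j, u i * M i j * u j := by
      intro u
      simp [dotProduct, Matrix.mulVec, Finset.mul_sum, mul_assoc]
    have hyy : y ⬝ᵥ y = x ⬝ᵥ x := by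
      simp [dotProduct, hy, abs_mul_abs_self]
    have h1 : y ⬝ᵥ (M *ᵥ y) ≤ lam * (x ⬝ᵥ x) := by
      rw [← hyy]; exact hray y
    have h2 : -(y ⬝ᵥ (M *ᵥ y)) ≤ x ⬝ᵥ (M *ᵥ x) := by
      rw [hexp, hexp, ← Finset.sum_neg_distrib]
      refine Finset.sum_le_sum fun i _ => ?_
      rw [← Finset.sum_neg_distrib]
      refine Finset.sum_le_sum fun j _ => ?_
      have habs : |x i * M i j * x j| = y i * M i j * y j := by
        rw [abs_mul, abs_mul, abs_of_nonneg (hMnn i j)]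
      calc -(y i * M i j * y j) = -|x i * M i j * x j| := by rw [habs]
        _ ≤ x i * M i j * x j := neg_abs_le _
    linarith
  have hop : ∀ w : Fin n → ℝ, (M *ᵥ w) ⬝ᵥ (M *ᵥ w) ≤ lam ^ 2 * (w ⬝ᵥ w) :=
    opnorm_sq_bound M hMs lam hray hrayneg
  -- mulVec formula
  have hMx : ∀ (x : Fin n → ℝ) (i : Fin n),
      (M *ᵥ x) i = (1 - δ) * x i + β * ∑ j ∈ GC.neighborFinset i, x j := by
    intro x i
    rw [hMdef, Matrix.add_mulVec, Matrix.smul_mulVec, Matrix.smul_mulVec,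
      Matrix.one_mulVec]
    simp [SimpleGraph.adjMatrix_mulVec_apply]
    ring
  -- monotonicity of mulVec
  have hMmono : ∀ x y : Fin n → ℝ, (∀ i, x i ≤ y i) → ∀ i, (M *ᵥ x) i ≤ (M *ᵥ y) i := by
    intro x y hxy i
    simp only [Matrix.mulVec, dotProduct]
    exact Finset.sum_le_sum fun j _ => mul_le_mul_of_nonneg_left (hxy j) (hMnn i j)
  -- the dominating sequence
  set z : ℕ → Fin n → ℝ := fun t => (fun v => M *ᵥ v)^[t] (fun _ => (1:ℝ)) with hz
  have hzsucc : ∀ t, z (t + 1) = M *ᵥ z t := by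
    intro t
    rw [hz]
    exact Function.iterate_succ_apply' _ _ _
  have hznn : ∀ t i, 0 ≤ z t i := by
    intro t
    induction t with
    | zero => intro i; rw [hz]; norm_num
    | succ t ih =>
      intro i
      rw [hzsucc]
      simp only [Matrix.mulVec, dotProduct]
      exact Finset.sum_nonneg fun j _ => mul_nonneg (hMnn i j) (ih j)
  have hzsq : ∀ t, z t ⬝ᵥ z t ≤ lam ^ (2 * t) * n := by
    intro t
    induction t with
    | zero =>
      rw [hz]
      simp [dotProduct]
    | succ t ih =>
      rw [hzsucc]
      calc (M *ᵥ z t) ⬝ᵥ (M *ᵥ z t) ≤ lam ^ 2 * (z t ⬝ᵥ z t) := hop (z t)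
        _ ≤ lam ^ 2 * (lam ^ (2 * t) * n) :=
            mul_le_mul_of_nonneg_left ih (by positivity)
        _ = lam ^ (2 * (t + 1)) * n := by ring
  have hzbound : ∀ t i, z t i ≤ lam ^ t * Real.sqrt n := by
    intro t i
    have h1 : (z t i) ^ 2 ≤ lam ^ (2 * t) * n := by
      refine le_trans ?_ (hzsq t)
      have : z t ⬝ᵥ z t = ∑ j, (z t j) ^ 2 := by
        simp [dotProduct, pow_two]
      rw [this]
      exact Finset.single_le_sum (fun j _ => sq_nonneg (z t j)) (Finset.mem_univ i)
    have h2 : z t i ≤ Real.sqrt (lam ^ (2 * t) * n) := by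
      calc z t i = Real.sqrt ((z t i) ^ 2) := (Real.sqrt_sq (hznn t i)).symm
        _ ≤ _ := Real.sqrt_le_sqrt h1
    rwa [Real.sqrt_mul (by positivity) (n : ℝ),
      show lam ^ (2 * t) = (lam ^ t) ^ 2 by rw [← pow_mul, Nat.mul_comm],
      Real.sqrt_sq (by positivity)] at h2
  -- generic bound on infection probabilities
  have hfact : ∀ (c : ℝ) (x : Fin n → ℝ), 0 ≤ c → c ≤ β → (∀ j, 0 ≤ x j) → (∀ j, x j ≤ 1) →
      ∀ i : Fin n,
      0 ≤ 1 - ∏ j ∈ GC.neighborFinset i, (1 - c * x j) ∧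
      1 - ∏ j ∈ GC.neighborFinset i, (1 - c * x j) ≤ 1 ∧
      1 - ∏ j ∈ GC.neighborFinset i, (1 - c * x j) ≤ β * ∑ j ∈ GC.neighborFinset i, x j := by
    intro c x hc0 hcβ hx0 hx1 i
    have hfac0 : ∀ j ∈ GC.neighborFinset i, 0 ≤ 1 - c * x j := by
      intro j _
      have : c * x j ≤ β * 1 := mul_le_mul hcβ (hx1 j) (hx0 j) (by linarith)
      linarith
    have hfac1 : ∀ j ∈ GC.neighborFinset i, 1 - c * x j ≤ 1 := by
      intro j _
      have : 0 ≤ c * x j := mul_nonneg hc0 (hx0 j)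
      linarith
    refine ⟨?_, ?_, ?_⟩
    · have := Finset.prod_le_one hfac0 hfac1
      linarith
    · have := Finset.prod_nonneg hfac0
      linarith
    · have hw := weier_prod (GC.neighborFinset i) (fun j => c * x j)
        (fun j hj => mul_nonneg hc0 (hx0 j))
        (fun j hj => by
          have h : c * x j ≤ β * 1 := mul_le_mul hcβ (hx1 j) (hx0 j) (by linarith)
          show c * x j ≤ 1
          linarith)
      have hsum : ∑ j ∈ GC.neighborFinset i, c * x j ≤ β * ∑ j ∈ GC.neighborFinset i, x j := by
        rw [← Finset.mul_sum]
        exact mul_le_mul_of_nonneg_right hcβ (Finset.sum_nonneg fun j _ => hx0 j)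
      linarith
  -- generic step bound given infection probability bounds
  have hstep : ∀ (x : Fin n → ℝ) (i : Fin n) (p : ℝ), (∀ j, 0 ≤ x j) → (∀ j, x j ≤ 1) →
      0 ≤ p → p ≤ 1 → p ≤ β * ∑ j ∈ GC.neighborFinset i, x j →
      0 ≤ (1 - δ) * x i + (1 - (1 - δ) * x i) * p ∧
      (1 - δ) * x i + (1 - (1 - δ) * x i) * p ≤ 1 ∧
      (1 - δ) * x i + (1 - (1 - δ) * x i) * p ≤ (M *ᵥ x) i := by
    intro x i p hx0 hx1 hp0 hp1 hpβ
    have hxi0 := hx0 i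
    have hxi1 := hx1 i
    have ha0 : 0 ≤ (1 - δ) * x i := mul_nonneg (by linarith) hxi0
    have ha1 : (1 - δ) * x i ≤ 1 - δ := by nlinarith
    refine ⟨by nlinarith, by nlinarith, ?_⟩
    rw [hMx x i]
    nlinarith
  -- awareness bounds
  have hinfo : ∀ (x : Fin n → ℝ), (∀ j, 0 ≤ x j) → (∀ j, x j ≤ 1) → ∀ i,
      0 ≤ infoAwareness n GI α x i ∧ infoAwareness n GI α x i ≤ 1 := by
    intro x h0 h1 i
    have hcard : (0:ℝ) < ((GI.neighborFinset i).card : ℝ) := by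
      exact_mod_cast Finset.card_pos.mpr (hGI i)
    have hs10 : 0 ≤ ∑ j ∈ GI.neighborFinset i, x j := Finset.sum_nonneg fun j _ => h0 j
    have hs11 : ∑ j ∈ GI.neighborFinset i, x j ≤ ((GI.neighborFinset i).card : ℝ) := by
      calc ∑ j ∈ GI.neighborFinset i, x j ≤ ∑ j ∈ GI.neighborFinset i, (1:ℝ) :=
            Finset.sum_le_sum fun j _ => h1 j
        _ = ((GI.neighborFinset i).card : ℝ) := by simp
    have hs20 : 0 ≤ ∑ j, x j := Finset.sum_nonneg fun j _ => h0 j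
    have hs21 : ∑ j, x j ≤ (n : ℝ) := by
      calc ∑ j, x j ≤ ∑ _j : Fin n, (1:ℝ) := Finset.sum_le_sum fun j _ => h1 j
        _ = (n : ℝ) := by simp
    have hnpos : (0:ℝ) < n := by exact_mod_cast hn
    unfold infoAwareness
    constructor
    · have t1 : 0 ≤ (α / ((GI.neighborFinset i).card : ℝ)) * ∑ j ∈ GI.neighborFinset i, x j :=
        mul_nonneg (div_nonneg hα0 (le_of_lt hcard)) hs10
      have t2 : 0 ≤ ((1 - α) / (n : ℝ)) * ∑ j, x j :=
        mul_nonneg (div_nonneg (by linarith : (0:ℝ) ≤ 1 - α) (le_of_lt hnpos)) hs20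
      linarith
    · have t1 : (α / ((GI.neighborFinset i).card : ℝ)) * ∑ j ∈ GI.neighborFinset i, x j ≤ α := by
        have := mul_le_mul_of_nonneg_left hs11 (div_nonneg hα0 (le_of_lt hcard))
        rwa [div_mul_cancel₀ α (ne_of_gt hcard)] at this
      have t2 : ((1 - α) / (n : ℝ)) * ∑ j, x j ≤ 1 - α := by
        have := mul_le_mul_of_nonneg_left hs21 (div_nonneg (by linarith : (0:ℝ) ≤ 1 - α) (le_of_lt hnpos))
        rwa [div_mul_cancel₀ (1 - α) (ne_of_gt hnpos)] at this
      linarith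
  -- the master convergence argument
  have main : ∀ f : (Fin n → ℝ) → (Fin n → ℝ),
      (∀ x, (∀ j, 0 ≤ x j) → (∀ j, x j ≤ 1) → ∀ i,
        0 ≤ f x i ∧ f x i ≤ 1 ∧ f x i ≤ (M *ᵥ x) i) →
      Tendsto (fun t => f^[t] x0) atTop (𝓝 (0 : Fin n → ℝ)) := by
    intro f hf
    have hiter : ∀ t, (∀ i, 0 ≤ f^[t] x0 i) ∧ (∀ i, f^[t] x0 i ≤ 1) ∧
        (∀ i, f^[t] x0 i ≤ z t i) := by
      intro t
      induction t with
      | zero =>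
        refine ⟨fun i => (hx0 i).1, fun i => (hx0 i).2, fun i => ?_⟩
        rw [hz]
        simp only [Function.iterate_zero, id_eq]
        exact (hx0 i).2
      | succ t ih =>
        obtain ⟨ih0, ih1, ihz⟩ := ih
        have hstep' := hf (f^[t] x0) ih0 ih1
        rw [Function.iterate_succ_apply']
        refine ⟨fun i => (hstep' i).1, fun i => (hstep' i).2.1, fun i => ?_⟩
        calc f (f^[t] x0) i ≤ (M *ᵥ (f^[t] x0)) i := (hstep' i).2.2
          _ ≤ (M *ᵥ z t) i := hMmono _ _ ihz i
          _ = z (t + 1) i := by rw [hzsucc]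
    rw [tendsto_pi_nhds]
    intro i
    rw [show (0 : Fin n → ℝ) i = 0 from rfl]
    apply squeeze_zero (fun t => (hiter t).1 i)
      (fun t => le_trans ((hiter t).2.2 i) (hzbound t i))
    have : Tendsto (fun t : ℕ => lam ^ t) atTop (𝓝 0) :=
      tendsto_pow_atTop_nhds_zero_of_lt_one hlamnn hlam1
    simpa using this.mul_const (Real.sqrt n)
  constructor
  · apply main
    intro x h0 h1 i
    have hp := hfact β x (le_of_lt hβ0) le_rfl h0 h1 i
    exact hstep x i (p01Bench n GC β x i) h0 h1 hp.1 hp.2.1 hp.2.2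
  · apply main
    intro x h0 h1 i
    have hai := hinfo x h0 h1 i
    have hd0 : 0 ≤ distAction n GI α x i := by unfold distAction; linarith [hai.2]
    have hd1 : distAction n GI α x i ≤ 1 := by unfold distAction; linarith [hai.1]
    have hp := hfact (β * distAction n GI α x i) x
      (mul_nonneg (le_of_lt hβ0) hd0)
      (by nlinarith) h0 h1 i
    exact hstep x i (p01Dist n GC GI α β x i) h0 h1 hp.1 hp.2.1 hp.2.2
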